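/- Resolution of the structure sheaf of a simple normal crossing: let R = ℂ[x₁,…,x_n], k ≤ n, and A = R/(x₁⋯x_k). For I ⊆ {1,…,k} let A_I = R/(x_i : i ∈ I). Then the Čech-type complex 0 → A → ⊕_{|I|=1} A_I → ⊕_{|I|=2} A_I → ⋯ → A_{{1,…,k}} → 0, with maps given by alternating sums of quotient maps (u_I ↦ ∑_j (-1)^{j+1} u_{I∖{i_j}} restricted), is exact. -/

import Mathlib

open MvPolynomial

/-- The index set `{1,…,k}` inside the variables `Fin n`. -/
def K18 (n k : ℕ) : Finset (Fin n) := Finset.univ.filter (fun i => (i : ℕ) < k)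

/-- `f = x₁⋯x_k`. -/
noncomputable def fk (n k : ℕ) : MvPolynomial (Fin n) ℂ := ∏ i ∈ K18 n k, X i

/-- `A = R/(x₁⋯x_k)`. -/
abbrev A18 (n k : ℕ) : Type := MvPolynomial (Fin n) ℂ ⧸ Ideal.span {fk n k}

/-- The ideal `(xᵢ : i ∈ s)`. -/
noncomputable def IS (n : ℕ) (s : Finset (Fin n)) : Ideal (MvPolynomial (Fin n) ℂ) :=
  Ideal.span ((fun i => (X i : MvPolynomial (Fin n) ℂ)) '' ↑s)

/-- `A_I = R/(xᵢ : i ∈ I)`. -/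
abbrev AI (n : ℕ) (s : Finset (Fin n)) : Type := MvPolynomial (Fin n) ℂ ⧸ IS n s

/-- The `j`-th cochain module `⊕_{|I| = j, I ⊆ {1,…,k}} A_I`. -/
def C18 (n k j : ℕ) : Type :=
  (s : {t : Finset (Fin n) // t ⊆ K18 n k ∧ t.card = j}) → AI n s.val

noncomputable instance (n k j : ℕ) : AddCommGroup (C18 n k j) :=
  Pi.addCommGroup

/-- The alternating-sum differential `d : C^j → C^{j+1}`,
`(d f)_I = ∑_{i ∈ I} (-1)^{pos(i,I)} (f_{I∖{i}} restricted)`. -/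
noncomputable def d18 (n k j : ℕ) (f : C18 n k j) : C18 n k (j + 1) :=
  fun s => ∑ i ∈ s.val.attach,
    ((-1 : ℤ) ^ (s.val.filter (fun a => a < i.val)).card) •
      (Ideal.Quotient.factor (S := IS n (s.val.erase i.val)) (T := IS n s.val)
          (Ideal.span_mono (Set.image_mono (by
            exact_mod_cast Finset.erase_subset i.val s.val)))
        (f ⟨s.val.erase i.val,
          ⟨(Finset.erase_subset i.val s.val).trans s.prop.1, by
            rw [Finset.card_erase_of_mem i.prop, s.prop.2]; rfl⟩⟩))

/-- The augmentation `A → ⊕_{|I|=1} A_I` given by the quotient maps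
(well-defined since `f = x₁⋯x_k ∈ (xᵢ)` for each `i ≤ k`). -/
noncomputable def e18 (n k : ℕ) (a : A18 n k) : C18 n k 1 :=
  fun s => Ideal.Quotient.factor (S := Ideal.span {fk n k}) (T := IS n s.val)
    (by
      rw [Ideal.span_le, Set.singleton_subset_iff]
      obtain ⟨i, hi⟩ := Finset.card_eq_one.mp s.prop.2
      have hiK : i ∈ K18 n k := s.prop.1 (by simp [hi])
      rw [fk, ← Finset.mul_prod_erase _ _ hiK]
      exact Ideal.mul_mem_right _ _
        (Ideal.subset_span ⟨i, by simp [hi], rfl⟩)) a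

namespace SNC18

variable {n : ℕ}

abbrev Rn (n : ℕ) := MvPolynomial (Fin n) ℂ

/-- `e` avoids `s`. -/
def avoid (s : Finset (Fin n)) (e : Fin n →₀ ℕ) : Prop := ∀ i ∈ s, e i = 0

instance (s : Finset (Fin n)) : DecidablePred (avoid s) := fun _ => by
  unfold avoid; infer_instance

/-- keep only the monomials satisfying `P`. -/
noncomputable def filt (P : (Fin n →₀ ℕ) → Prop) [DecidablePred P] (p : Rn n) : Rn n :=
  ∑ d ∈ p.support.filter P, monomial d (coeff d p)

lemma coeff_filt (P : (Fin n →₀ ℕ) → Prop) [DecidablePred P] (p : Rn n) (e : Fin n →₀ ℕ) :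
    coeff e (filt P p) = if P e then coeff e p else 0 := by
  rw [filt, coeff_sum]
  simp only [coeff_monomial]
  rw [Finset.sum_ite_eq' (p.support.filter P) e (fun d => coeff d p)]
  by_cases hP : P e
  · by_cases hs : e ∈ p.support
    · simp [hP, hs]
    · simp only [Finset.mem_filter, hP, and_true, hs, if_false, if_true]
      exact (MvPolynomial.notMem_support_iff.mp hs).symm
  · simp [hP]

lemma filt_zero (P : (Fin n →₀ ℕ) → Prop) [DecidablePred P] : filt P (0 : Rn n) = 0 := by
  apply MvPolynomial.ext; intro e
  rw [coeff_filt]; simp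

lemma mem_IS_coeff {s : Finset (Fin n)} {p : Rn n} (hp : p ∈ IS n s) {e : Fin n →₀ ℕ}
    (he : avoid s e) : coeff e p = 0 := by
  unfold IS at hp
  induction hp using Submodule.span_induction generalizing e with
  | mem x h =>
    obtain ⟨i, hi, rfl⟩ := h
    show coeff e (X i : Rn n) = 0
    rw [show (X i : Rn n) = monomial (Finsupp.single i 1) 1 from rfl, coeff_monomial]
    have : Finsupp.single i 1 ≠ e := by
      intro hsi
      have := he i hi
      rw [← hsi] at this
      simp at this
    simp [this]
  | zero => simp
  | add x y hx hy ihx ihy => rw [coeff_add, ihx he, ihy he, add_zero]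
  | smul r x hx ih =>
    rw [smul_eq_mul, coeff_mul]
    apply Finset.sum_eq_zero
    intro q hq
    have hq2 : q.1 + q.2 = e := Finset.HasAntidiagonal.mem_antidiagonal.mp hq
    have : avoid s q.2 := by
      intro i hi
      have := he i hi
      rw [← hq2] at this
      simp only [Finsupp.add_apply] at this
      omega
    rw [ih this, mul_zero]

lemma monomial_mem_IS {s : Finset (Fin n)} {e : Fin n →₀ ℕ} (h : ¬ avoid s e) (c : ℂ) :
    monomial e c ∈ IS n s := by
  rw [avoid] at h
  push_neg at h
  obtain ⟨i, hi, hei⟩ := h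
  have hle : Finsupp.single i 1 ≤ e := by
    rw [Finsupp.single_le_iff]
    omega
  have : monomial e c = X i * monomial (e - Finsupp.single i 1) c := by
    rw [show (X i : Rn n) = monomial (Finsupp.single i 1) 1 from rfl, monomial_mul, one_mul,
      add_tsub_cancel_of_le hle]
  rw [this]
  exact Ideal.mul_mem_right _ _ (Ideal.subset_span ⟨i, hi, rfl⟩)

/-- the canonical reduced form. -/
noncomputable def red (s : Finset (Fin n)) (p : Rn n) : Rn n := filt (avoid s) p

lemma coeff_red (s : Finset (Fin n)) (p : Rn n) (e : Fin n →₀ ℕ) :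
    coeff e (red s p) = if avoid s e then coeff e p else 0 := coeff_filt _ _ _

lemma sub_red_mem (s : Finset (Fin n)) (p : Rn n) : p - red s p ∈ IS n s := by
  have hsplit : red s p + ∑ d ∈ p.support.filter (fun e => ¬ avoid s e), monomial d (coeff d p)
      = p := by
    rw [red, filt, Finset.sum_filter_add_sum_filter_not p.support (avoid s)
      (fun d => monomial d (coeff d p))]
    exact support_sum_monomial_coeff p
  have : p - red s p = ∑ d ∈ p.support.filter (fun e => ¬ avoid s e), monomial d (coeff d p) := by
    rw [sub_eq_iff_eq_add']; exact hsplit.symm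
  rw [this]
  exact Ideal.sum_mem _ (fun d hd => monomial_mem_IS (Finset.mem_filter.mp hd).2 _)

lemma mk_red (s : Finset (Fin n)) (p : Rn n) :
    Ideal.Quotient.mk (IS n s) (red s p) = Ideal.Quotient.mk (IS n s) p := by
  rw [Ideal.Quotient.mk_eq_mk_iff_sub_mem]
  simpa [neg_sub] using (IS n s).neg_mem (sub_red_mem s p)

lemma red_eq_of_mk_eq {s : Finset (Fin n)} {p q : Rn n}
    (h : Ideal.Quotient.mk (IS n s) p = Ideal.Quotient.mk (IS n s) q) : red s p = red s q := by
  apply MvPolynomial.ext; intro e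
  rw [coeff_red, coeff_red]
  by_cases he : avoid s e
  · simp only [he, if_true]
    have hmem : p - q ∈ IS n s := (Ideal.Quotient.mk_eq_mk_iff_sub_mem p q).mp h
    have := mem_IS_coeff hmem he
    rw [coeff_sub] at this
    exact sub_eq_zero.mp this
  · simp [he]
/-- canonical reduced representative of an element of `AI n s`. -/
noncomputable def sig (s : Finset (Fin n)) (a : AI n s) : Rn n :=
  red s (Function.surjInv Ideal.Quotient.mk_surjective a)

lemma mk_sig (s : Finset (Fin n)) (a : AI n s) :
    Ideal.Quotient.mk (IS n s) (sig s a) = a := by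
  rw [sig, mk_red]; exact Function.surjInv_eq _ _

lemma sig_mk (s : Finset (Fin n)) (p : Rn n) :
    sig s (Ideal.Quotient.mk (IS n s) p) = red s p :=
  red_eq_of_mk_eq (Function.surjInv_eq _ _)

/-- the coefficient functional on `AI n s`. -/
noncomputable def cc (e : Fin n →₀ ℕ) (s : Finset (Fin n)) (a : AI n s) : ℂ :=
  coeff e (sig s a)

lemma cc_mk (e : Fin n →₀ ℕ) (s : Finset (Fin n)) (p : Rn n) :
    cc e s (Ideal.Quotient.mk (IS n s) p) = if avoid s e then coeff e p else 0 := by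
  rw [cc, sig_mk, coeff_red]

lemma cc_not_avoid {e : Fin n →₀ ℕ} {s : Finset (Fin n)} (h : ¬ avoid s e) (a : AI n s) :
    cc e s a = 0 := by
  obtain ⟨p, rfl⟩ := Ideal.Quotient.mk_surjective a
  rw [cc_mk, if_neg h]

lemma AI_ext {s : Finset (Fin n)} {a b : AI n s} (h : ∀ e, cc e s a = cc e s b) : a = b := by
  have hs : sig s a = sig s b := MvPolynomial.ext _ _ h
  rw [← mk_sig s a, ← mk_sig s b, hs]

lemma cc_add (e : Fin n →₀ ℕ) (s : Finset (Fin n)) (a b : AI n s) :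
    cc e s (a + b) = cc e s a + cc e s b := by
  obtain ⟨p, rfl⟩ := Ideal.Quotient.mk_surjective a
  obtain ⟨q, rfl⟩ := Ideal.Quotient.mk_surjective b
  rw [← map_add, cc_mk, cc_mk, cc_mk, coeff_add]
  by_cases he : avoid s e <;> simp [he]

/-- `cc` as an additive monoid hom. -/
noncomputable def ccHom (e : Fin n →₀ ℕ) (s : Finset (Fin n)) : AI n s →+ ℂ :=
  AddMonoidHom.mk' (cc e s) (cc_add e s)

lemma cc_sum (e : Fin n →₀ ℕ) (s : Finset (Fin n)) {ι : Type*} (t : Finset ι)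
    (f : ι → AI n s) : cc e s (∑ i ∈ t, f i) = ∑ i ∈ t, cc e s (f i) :=
  map_sum (ccHom e s) f t

lemma cc_zsmul (e : Fin n →₀ ℕ) (s : Finset (Fin n)) (z : ℤ) (a : AI n s) :
    cc e s (z • a) = z • cc e s a :=
  map_zsmul (ccHom e s) z a

lemma cc_factor {t s : Finset (Fin n)} (hts : IS n t ≤ IS n s) (hsub : t ⊆ s)
    {e : Fin n →₀ ℕ} (he : avoid s e) (a : AI n t) :
    cc e s (Ideal.Quotient.factor (S := IS n t) (T := IS n s) hts a) = cc e t a := by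
  obtain ⟨p, rfl⟩ := Ideal.Quotient.mk_surjective a
  rw [Ideal.Quotient.factor_mk, cc_mk, cc_mk, if_pos he, if_pos (show avoid t e from fun i hi => he i (hsub hi))]
/-- cochain modules (restated from the problem file context). -/
def eps (t : Finset (Fin n)) (i : Fin n) : ℤ := (-1) ^ ((t.filter (fun a => a < i)).card)



noncomputable def G (n k j : ℕ) (u : C18 n k j) (e : Fin n →₀ ℕ) (t : Finset (Fin n)) : ℂ :=
  if h : t ⊆ K18 n k ∧ t.card = j then cc e t (u ⟨t, h⟩) else 0

lemma G_eq {k j : ℕ} (u : C18 n k j) (e : Fin n →₀ ℕ) {t : Finset (Fin n)}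
    (h : t ⊆ K18 n k ∧ t.card = j) : G n k j u e t = cc e t (u ⟨t, h⟩) := dif_pos h

lemma G_zero {k j : ℕ} (e : Fin n →₀ ℕ) (t : Finset (Fin n)) :
    G n k j (0 : C18 n k j) e t = 0 := by
  unfold G
  split
  · exact map_zero (ccHom e t)
  · rfl

lemma cc_d {k j : ℕ} (u : C18 n k j) {s : Finset (Fin n)} (hs : s ⊆ K18 n k ∧ s.card = j + 1)
    {e : Fin n →₀ ℕ} (he : avoid s e) :
    cc e s (d18 n k j u ⟨s, hs⟩) = ∑ i ∈ s, eps s i • G n k j u e (s.erase i) := by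
  simp only [d18]
  rw [cc_sum]
  rw [← Finset.sum_attach s (fun x => eps s x • G n k j u e (s.erase x))]
  refine Finset.sum_congr rfl (fun i _ => ?_)
  erw [cc_zsmul, cc_factor _ (Finset.erase_subset i.val s) he,
    G_eq u e ⟨(Finset.erase_subset i.val s).trans hs.1, by
      rw [Finset.card_erase_of_mem i.prop, hs.2]; rfl⟩]
  rfl

def minV (n k : ℕ) (e : Fin n →₀ ℕ) : WithBot (Fin n) :=
  ((K18 n k).filter (fun w => e w = 0)).min

lemma minV_exists {k : ℕ} {s : Finset (Fin n)} (hs : s ⊆ K18 n k) (hne : s.Nonempty)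
    {e : Fin n →₀ ℕ} (he : avoid s e) : ∃ v : Fin n, minV n k e = v := by
  obtain ⟨a, ha⟩ := hne
  exact Finset.min_of_mem (Finset.mem_filter.mpr ⟨hs ha, he a ha⟩)

lemma minV_mem {k : ℕ} {v : Fin n} {e : Fin n →₀ ℕ}
    (hv : minV n k e = (v : WithBot (Fin n))) : v ∈ K18 n k ∧ e v = 0 :=
  Finset.mem_filter.mp (Finset.mem_of_min hv)

lemma minV_le {k : ℕ} {v : Fin n} {e : Fin n →₀ ℕ}
    (hv : minV n k e = (v : WithBot (Fin n))) {w : Fin n} (hw : w ∈ K18 n k) (hew : e w = 0) :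
    v ≤ w :=
  Finset.min_le_of_eq (Finset.mem_filter.mpr ⟨hw, hew⟩) hv

noncomputable def Hmap (n k j : ℕ) (u : C18 n k (j + 1)) : C18 n k j := fun t =>
  Ideal.Quotient.mk (IS n t.val)
    (∑ v ∈ ((K18 n k) \ t.val).attach,
      filt (fun d => minV n k d = (v.val : WithBot (Fin n)))
        (sig (insert v.val t.val)
          (u ⟨insert v.val t.val, by
            have hv := Finset.mem_sdiff.mp v.prop
            exact ⟨Finset.insert_subset hv.1 t.prop.1,
              by rw [Finset.card_insert_of_notMem hv.2, t.prop.2]⟩⟩)))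

lemma cc_Hmap_eq {k j : ℕ} (u : C18 n k (j + 1)) {t : Finset (Fin n)}
    (ht : t ⊆ K18 n k ∧ t.card = j) {e : Fin n →₀ ℕ} (he : avoid t e) :
    cc e t (Hmap n k j u ⟨t, ht⟩) =
      ∑ v ∈ (K18 n k) \ t, (if minV n k e = (v : WithBot (Fin n))
        then G n k (j + 1) u e (insert v t) else 0) := by
  simp only [Hmap]
  rw [cc_mk, if_pos he, coeff_sum]
  rw [← Finset.sum_attach ((K18 n k) \ t) (fun v => if minV n k e = (v : WithBot (Fin n))
        then G n k (j + 1) u e (insert v t) else 0)]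
  refine Finset.sum_congr rfl (fun v _ => ?_)
  rw [coeff_filt]
  by_cases hm : minV n k e = (v.val : WithBot (Fin n))
  · have hv := Finset.mem_sdiff.mp v.prop
    rw [if_pos hm, if_pos hm, G_eq u e ⟨Finset.insert_subset hv.1 ht.1,
      by rw [Finset.card_insert_of_notMem hv.2, ht.2]⟩]
    rfl
  · rw [if_neg hm, if_neg hm]

lemma cc_Hmap_of {k j : ℕ} (u : C18 n k (j + 1)) {t : Finset (Fin n)}
    (ht : t ⊆ K18 n k ∧ t.card = j) {e : Fin n →₀ ℕ} (he : avoid t e) {v₀ : Fin n}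
    (hv : minV n k e = (v₀ : WithBot (Fin n))) (hvt : v₀ ∉ t) :
    cc e t (Hmap n k j u ⟨t, ht⟩) = G n k (j + 1) u e (insert v₀ t) := by
  rw [cc_Hmap_eq u ht he,
    Finset.sum_eq_single_of_mem v₀ (Finset.mem_sdiff.mpr ⟨(minV_mem hv).1, hvt⟩)]
  · rw [if_pos hv]
  · intro v _ hne
    rw [if_neg]
    intro h
    rw [hv] at h
    exact hne (by exact_mod_cast h.symm)

lemma cc_Hmap_zero_mem {k j : ℕ} (u : C18 n k (j + 1)) {t : Finset (Fin n)}
    (ht : t ⊆ K18 n k ∧ t.card = j) {e : Fin n →₀ ℕ} (he : avoid t e) {v₀ : Fin n}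
    (hv : minV n k e = (v₀ : WithBot (Fin n))) (hvt : v₀ ∈ t) :
    cc e t (Hmap n k j u ⟨t, ht⟩) = 0 := by
  rw [cc_Hmap_eq u ht he]
  apply Finset.sum_eq_zero
  intro v hvm
  rw [if_neg]
  intro h
  rw [hv] at h
  have : v₀ = v := by exact_mod_cast h
  exact (Finset.mem_sdiff.mp hvm).2 (this ▸ hvt)

lemma Hmap_zero {k : ℕ} (j : ℕ) (tt : {t : Finset (Fin n) // t ⊆ K18 n k ∧ t.card = j}) :
    Hmap n k j (0 : C18 n k (j + 1)) tt = 0 := by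
  obtain ⟨t, ht⟩ := tt
  apply AI_ext
  intro e
  rw [show cc e t (0 : AI n t) = 0 from map_zero (ccHom e t)]
  by_cases he : avoid t e
  · rw [cc_Hmap_eq _ ht he]
    apply Finset.sum_eq_zero
    intro v _
    rw [G_zero]
    split <;> rfl
  · exact cc_not_avoid he _
lemma eps_eq_one {t : Finset (Fin n)} {v : Fin n} (h : ∀ a ∈ t, ¬ a < v) : eps t v = 1 := by
  unfold eps
  rw [Finset.filter_false_of_mem h, Finset.card_empty, pow_zero]

lemma eps_insert_lt {v i : Fin n} {s : Finset (Fin n)} (hv : v ∉ s) (hlt : v < i) :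
    eps (insert v s) i = - eps s i := by
  unfold eps
  rw [Finset.filter_insert, if_pos hlt,
    Finset.card_insert_of_notMem (fun h => hv (Finset.mem_of_mem_filter v h)), pow_succ]
  ring

lemma eps_erase_lt {i i' : Fin n} {s : Finset (Fin n)} (hi : i ∈ s) (hlt : i < i') :
    eps (s.erase i) i' = - eps s i' := by
  unfold eps
  rw [Finset.filter_erase,
    Finset.card_erase_of_mem
      (show i ∈ s.filter (fun a => a < i') from Finset.mem_filter.mpr ⟨hi, hlt⟩)]
  have hpos : 0 < (Finset.filter (fun a => a < i') s).card :=
    Finset.card_pos.mpr ⟨i, Finset.mem_filter.mpr ⟨hi, hlt⟩⟩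
  obtain ⟨m, hm⟩ : ∃ m, (Finset.filter (fun a => a < i') s).card = m + 1 :=
    ⟨(Finset.filter (fun a => a < i') s).card - 1, (Nat.succ_pred_eq_of_pos hpos).symm⟩
  rw [hm]
  simp [pow_succ]

lemma eps_erase_gt {i i' : Fin n} {s : Finset (Fin n)} (hlt : i' < i) :
    eps (s.erase i) i' = eps s i' := by
  unfold eps
  rw [Finset.filter_erase, Finset.erase_eq_of_notMem]
  intro hmem
  exact absurd (Finset.mem_filter.mp hmem).2 (not_lt.mpr hlt.le)

lemma eps_pair_left {a b : Fin n} (hab : a < b) : eps {a, b} a = 1 := by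
  apply eps_eq_one
  intro x hx
  rcases Finset.mem_insert.mp hx with rfl | hx
  · exact lt_irrefl _
  · rw [Finset.mem_singleton.mp hx]
    exact not_lt.mpr hab.le

lemma eps_pair_right {a b : Fin n} (hab : a < b) : eps {a, b} b = -1 := by
  unfold eps
  rw [Finset.filter_insert, if_pos hab, Finset.filter_singleton, if_neg (lt_irrefl b)]
  simp

/-- The cone contraction identity. -/
lemma key (s : Finset (Fin n)) (v₀ : Fin n) (hv₀ : ∀ a ∈ s, v₀ ≤ a)
    (G : Finset (Fin n) → ℂ) :
    (∑ i ∈ s, eps s i • (if v₀ ∈ s.erase i then (0 : ℂ) else G (insert v₀ (s.erase i))))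
      + (if v₀ ∈ s then 0 else
          ∑ i ∈ insert v₀ s, eps (insert v₀ s) i • G ((insert v₀ s).erase i))
      = G s := by
  by_cases hv : v₀ ∈ s
  · rw [if_pos hv, add_zero]
    rw [Finset.sum_eq_single_of_mem v₀ hv (fun i hi hne => by
      rw [if_pos (Finset.mem_erase.mpr ⟨fun h => hne h.symm, hv⟩), smul_zero])]
    rw [if_neg (Finset.notMem_erase v₀ s), Finset.insert_erase hv,
      eps_eq_one (fun a ha => not_lt.mpr (hv₀ a ha)), one_smul]
  · rw [if_neg hv, Finset.sum_insert hv, Finset.erase_insert hv,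
      eps_eq_one (fun a ha => by
        rcases Finset.mem_insert.mp ha with rfl | ha
        · exact lt_irrefl _
        · exact not_lt.mpr (hv₀ a ha)), one_smul]
    have hcancel : ∀ i ∈ s, eps (insert v₀ s) i • G ((insert v₀ s).erase i)
        = - (eps s i • (if v₀ ∈ s.erase i then (0 : ℂ) else G (insert v₀ (s.erase i)))) := by
      intro i hi
      have hne : v₀ ≠ i := fun h => hv (h ▸ hi)
      have hlt : v₀ < i := lt_of_le_of_ne (hv₀ i hi) hne
      rw [if_neg (fun h => hv (Finset.mem_of_mem_erase h)),
        Finset.erase_insert_of_ne hne, eps_insert_lt hv hlt, neg_smul]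
    rw [Finset.sum_congr rfl hcancel]
    rw [Finset.sum_neg_distrib]
    ring

lemma eps_swap {i i' : Fin n} {s : Finset (Fin n)} (hi : i ∈ s) (hi' : i' ∈ s) (hne : i ≠ i') :
    eps s i * eps (s.erase i) i' = - (eps s i' * eps (s.erase i') i) := by
  rcases hne.lt_or_gt with hlt | hlt
  · rw [eps_erase_lt hi hlt, eps_erase_gt hlt]
    ring
  · rw [eps_erase_gt hlt, eps_erase_lt hi' hlt]
    ring

lemma erase_erase_comm {i i' : Fin n} (s : Finset (Fin n)) :
    (s.erase i).erase i' = (s.erase i').erase i := by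
  ext a
  simp only [Finset.mem_erase]
  tauto

lemma key2 (s : Finset (Fin n)) (G : Finset (Fin n) → ℂ) :
    ∑ i ∈ s, eps s i • ∑ i' ∈ s.erase i, eps (s.erase i) i' • G ((s.erase i).erase i') = 0 := by
  have hstep : ∀ i, eps s i • ∑ i' ∈ s.erase i, eps (s.erase i) i' • G ((s.erase i).erase i')
      = ∑ i' ∈ s, (if i' ≠ i then (eps s i * eps (s.erase i) i') • G ((s.erase i).erase i')
          else 0) := by
    intro i
    rw [Finset.smul_sum, ← Finset.sum_filter, Finset.filter_ne']
    exact Finset.sum_congr rfl fun i' _ => smul_smul _ _ _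
  rw [Finset.sum_congr rfl (fun i _ => hstep i), ← Finset.sum_product']
  refine Finset.sum_involution (fun p _ => (p.2, p.1)) ?_ ?_ (fun p hp => ?_) (fun p hp => rfl)
  · intro p hp
    by_cases hne : p.2 ≠ p.1
    · have hmem := Finset.mem_product.mp hp
      rw [if_pos hne, if_pos hne.symm, erase_erase_comm,
        eps_swap hmem.2 hmem.1 hne, neg_smul]
      ring
    · rw [if_neg hne, if_neg (fun h : p.1 ≠ p.2 => hne h.symm), add_zero]
  · intro p hp hf hswap
    apply hf
    have h1 : p.2 = p.1 := congrArg Prod.fst hswap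
    rw [if_neg (fun h => h h1)]
  · exact Finset.mem_product.mpr ⟨(Finset.mem_product.mp hp).2, (Finset.mem_product.mp hp).1⟩
/-- The chain-homotopy identity `d∘H + H∘d = id` in positive degrees. -/
lemma homotopy {k : ℕ} (j : ℕ) (u : C18 n k (j + 1)) {s : Finset (Fin n)}
    (hs : s ⊆ K18 n k ∧ s.card = j + 1) :
    d18 n k j (Hmap n k j u) ⟨s, hs⟩ + Hmap n k (j + 1) (d18 n k (j + 1) u) ⟨s, hs⟩
      = u ⟨s, hs⟩ := by
  apply AI_ext
  intro e
  by_cases he : avoid s e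
  · have hsne : s.Nonempty := Finset.card_pos.mp (by rw [hs.2]; exact Nat.succ_pos j)
    obtain ⟨v₀, hv₀⟩ := minV_exists hs.1 hsne he
    have hmin : ∀ a ∈ s, v₀ ≤ a := fun a ha => minV_le hv₀ (hs.1 ha) (he a ha)
    rw [cc_add, cc_d (Hmap n k j u) hs he]
    have hterm : ∀ i ∈ s, eps s i • G n k j (Hmap n k j u) e (s.erase i)
        = eps s i • (if v₀ ∈ s.erase i then (0 : ℂ)
            else G n k (j + 1) u e (insert v₀ (s.erase i))) := by
      intro i hi
      congr 1
      have hesub : s.erase i ⊆ K18 n k := (Finset.erase_subset _ _).trans hs.1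
      have hecard : (s.erase i).card = j := by
        rw [Finset.card_erase_of_mem hi, hs.2]; rfl
      have heavoid : avoid (s.erase i) e := fun a ha => he a (Finset.mem_of_mem_erase ha)
      rw [G_eq (Hmap n k j u) e ⟨hesub, hecard⟩]
      by_cases hvi : v₀ ∈ s.erase i
      · rw [if_pos hvi, cc_Hmap_zero_mem u ⟨hesub, hecard⟩ heavoid hv₀ hvi]
      · rw [if_neg hvi, cc_Hmap_of u ⟨hesub, hecard⟩ heavoid hv₀ hvi]
    rw [Finset.sum_congr rfl hterm]
    have hsecond : cc e s (Hmap n k (j + 1) (d18 n k (j + 1) u) ⟨s, hs⟩)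
        = if v₀ ∈ s then 0 else ∑ i ∈ insert v₀ s, eps (insert v₀ s) i •
            G n k (j + 1) u e ((insert v₀ s).erase i) := by
      by_cases hvs : v₀ ∈ s
      · rw [if_pos hvs, cc_Hmap_zero_mem _ hs he hv₀ hvs]
      · rw [if_neg hvs, cc_Hmap_of _ hs he hv₀ hvs]
        have hsub : insert v₀ s ⊆ K18 n k := Finset.insert_subset (minV_mem hv₀).1 hs.1
        have hcard : (insert v₀ s).card = (j + 1) + 1 := by
          rw [Finset.card_insert_of_notMem hvs, hs.2]
        have havoid : avoid (insert v₀ s) e := by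
          intro a ha
          rcases Finset.mem_insert.mp ha with rfl | ha
          · exact (minV_mem hv₀).2
          · exact he a ha
        rw [G_eq _ e ⟨hsub, hcard⟩, cc_d u ⟨hsub, hcard⟩ havoid]
    rw [hsecond, show cc e s (u ⟨s, hs⟩) = G n k (j + 1) u e s from (G_eq u e hs).symm]
    exact key s v₀ hmin (G n k (j + 1) u e)
  · rw [cc_not_avoid he, cc_not_avoid he]

lemma dd_zero {k : ℕ} (j : ℕ) (w : C18 n k j) : d18 n k (j + 1) (d18 n k j w) = 0 := by
  funext tt
  obtain ⟨s, hs⟩ := tt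
  apply AI_ext
  intro e
  have h0 : cc e s ((0 : C18 n k (j + 1 + 1)) ⟨s, hs⟩) = 0 := map_zero (ccHom e s)
  rw [h0]
  by_cases he : avoid s e
  · rw [cc_d (d18 n k j w) hs he]
    have hterm : ∀ i ∈ s, eps s i • G n k (j + 1) (d18 n k j w) e (s.erase i)
        = eps s i • ∑ i' ∈ s.erase i, eps (s.erase i) i' •
            G n k j w e ((s.erase i).erase i') := by
      intro i hi
      congr 1
      have hesub : s.erase i ⊆ K18 n k := (Finset.erase_subset _ _).trans hs.1
      have hecard : (s.erase i).card = j + 1 := by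
        rw [Finset.card_erase_of_mem hi, hs.2]; rfl
      have heavoid : avoid (s.erase i) e := fun a ha => he a (Finset.mem_of_mem_erase ha)
      rw [G_eq _ e ⟨hesub, hecard⟩, cc_d w ⟨hesub, hecard⟩ heavoid]
    rw [Finset.sum_congr rfl hterm]
    exact key2 s (G n k j w e)
  · exact cc_not_avoid he _

lemma d_e_zero {k : ℕ} (a : A18 n k) : d18 n k 1 (e18 n k a) = 0 := by
  obtain ⟨p, rfl⟩ := Ideal.Quotient.mk_surjective a
  funext tt
  obtain ⟨s, hs⟩ := tt
  apply AI_ext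
  intro e
  have h0 : cc e s ((0 : C18 n k 2) ⟨s, hs⟩) = 0 := map_zero (ccHom e s)
  rw [h0]
  by_cases he : avoid s e
  · rw [cc_d (e18 n k (Ideal.Quotient.mk _ p)) hs he]
    have hterm : ∀ i ∈ s, eps s i • G n k 1 (e18 n k (Ideal.Quotient.mk _ p)) e (s.erase i)
        = eps s i • coeff e p := by
      intro i hi
      congr 1
      have hesub : s.erase i ⊆ K18 n k := (Finset.erase_subset _ _).trans hs.1
      have hecard : (s.erase i).card = 1 := by
        rw [Finset.card_erase_of_mem hi, hs.2]
      have heavoid : avoid (s.erase i) e := fun a ha => he a (Finset.mem_of_mem_erase ha)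
      rw [G_eq _ e ⟨hesub, hecard⟩]
      show cc e (s.erase i) (Ideal.Quotient.factor _ (Ideal.Quotient.mk _ p)) = coeff e p
      rw [Ideal.Quotient.factor_mk, cc_mk, if_pos heavoid]
    rw [Finset.sum_congr rfl hterm, ← Finset.sum_smul]
    obtain ⟨x, y, hxy, rfl⟩ := Finset.card_eq_two.mp hs.2
    rcases hxy.lt_or_gt with hlt | hlt
    · rw [Finset.sum_pair hxy, eps_pair_left hlt, eps_pair_right hlt]
      simp
    · rw [Finset.sum_pair hxy, Finset.pair_comm x y, eps_pair_left hlt, eps_pair_right hlt]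
      simp
  · exact cc_not_avoid he _
lemma exact_dd {k : ℕ} (j : ℕ) : Function.Exact (d18 n k j) (d18 n k (j + 1)) := by
  intro u
  constructor
  · intro hu
    refine ⟨Hmap n k j u, funext fun tt => ?_⟩
    obtain ⟨s, hs⟩ := tt
    have hh := homotopy j u hs
    rw [hu, Hmap_zero (j + 1) ⟨s, hs⟩, add_zero] at hh
    exact hh
  · rintro ⟨w, rfl⟩
    exact dd_zero j w

lemma exact_ed {k : ℕ} : Function.Exact (e18 n k) (d18 n k 1) := by
  intro u
  constructor
  · intro hu
    refine ⟨Ideal.Quotient.mk _ (∑ v ∈ (K18 n k).attach,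
      filt (fun d => minV n k d = (v.val : WithBot (Fin n)))
        (sig {v.val} (u ⟨{v.val},
          ⟨Finset.singleton_subset_iff.mpr v.prop, Finset.card_singleton _⟩⟩))), ?_⟩
    funext tt
    obtain ⟨s, hs⟩ := tt
    apply AI_ext
    intro e
    by_cases he : avoid s e
    · obtain ⟨i, rfl⟩ := Finset.card_eq_one.mp hs.2
      have hiK : i ∈ K18 n k := hs.1 (Finset.mem_singleton_self i)
      obtain ⟨v₀, hv₀⟩ := minV_exists hs.1 ⟨i, Finset.mem_singleton_self i⟩ he
      show cc e {i} (Ideal.Quotient.factor _ (Ideal.Quotient.mk _ _)) = _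
      rw [Ideal.Quotient.factor_mk, cc_mk, if_pos he, coeff_sum]
      have hterm : ∀ v ∈ (K18 n k).attach,
          coeff e (filt (fun d => minV n k d = (v.val : WithBot (Fin n)))
            (sig {v.val} (u ⟨{v.val},
              ⟨Finset.singleton_subset_iff.mpr v.prop, Finset.card_singleton _⟩⟩)))
          = if minV n k e = (v.val : WithBot (Fin n)) then G n k 1 u e {v.val} else 0 := by
        intro v _
        rw [coeff_filt]
        by_cases hm : minV n k e = (v.val : WithBot (Fin n))
        · rw [if_pos hm, if_pos hm,
            G_eq u e ⟨Finset.singleton_subset_iff.mpr v.prop, Finset.card_singleton _⟩]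
          rfl
        · rw [if_neg hm, if_neg hm]
      rw [Finset.sum_congr rfl hterm,
        Finset.sum_attach (K18 n k) (fun v => if minV n k e = (v : WithBot (Fin n))
          then G n k 1 u e {v} else 0),
        Finset.sum_eq_single_of_mem v₀ (minV_mem hv₀).1 (fun v _ hne => by
          rw [if_neg]
          intro h
          rw [hv₀] at h
          exact hne (by exact_mod_cast h.symm)),
        if_pos hv₀]
      by_cases hvi : v₀ = i
      · subst hvi
        rw [G_eq u e hs]
      · have hlt : v₀ < i :=
          (minV_le hv₀ hiK (he i (Finset.mem_singleton_self i))).lt_of_ne hvi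
        have hpair : ({v₀, i} : Finset (Fin n)) ⊆ K18 n k ∧ ({v₀, i} : Finset (Fin n)).card = 1 + 1 :=
          ⟨Finset.insert_subset (minV_mem hv₀).1 (Finset.singleton_subset_iff.mpr hiK),
            Finset.card_pair hvi⟩
        have havoid : avoid {v₀, i} e := by
          intro a ha
          rcases Finset.mem_insert.mp ha with rfl | ha
          · exact (minV_mem hv₀).2
          · rw [Finset.mem_singleton.mp ha]
            exact he i (Finset.mem_singleton_self i)
        have h2 : cc e {v₀, i} (d18 n k 1 u ⟨{v₀, i}, hpair⟩) = 0 := by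
          rw [hu]
          exact map_zero (ccHom e _)
        rw [cc_d u hpair havoid, Finset.sum_pair hvi] at h2
        have her1 : ({v₀, i} : Finset (Fin n)).erase v₀ = {i} := by
          rw [Finset.erase_insert (by simpa using hvi)]
        have her2 : ({v₀, i} : Finset (Fin n)).erase i = {v₀} := by
          rw [Finset.pair_comm, Finset.erase_insert (by simpa using (Ne.symm hvi))]
        rw [her1, her2, eps_pair_left hlt, eps_pair_right hlt, one_smul, neg_smul, one_smul] at h2
        have h3 : G n k 1 u e {v₀} = G n k 1 u e {i} := by
          have h2' : G n k 1 u e {i} - G n k 1 u e {v₀} = 0 := by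
            rw [sub_eq_add_neg]; exact h2
          exact (sub_eq_zero.mp h2').symm
        rw [h3, G_eq u e hs]
    · rw [cc_not_avoid he, cc_not_avoid he]
  · rintro ⟨a, rfl⟩
    exact d_e_zero a

lemma prod_X_eq (t : Finset (Fin n)) :
    (∏ i ∈ t, (X i : Rn n)) = monomial (∑ i ∈ t, Finsupp.single i 1) 1 := by
  induction t using Finset.induction with
  | empty => simp [MvPolynomial.monomial_zero']
  | insert a s ha ih =>
    rw [Finset.prod_insert ha, Finset.sum_insert ha, ih,
      show (X _ : Rn n) = monomial (Finsupp.single _ 1) 1 from rfl, monomial_mul, one_mul]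

lemma e18_injective {k : ℕ} : Function.Injective (e18 n k) := by
  have hzero : ∀ a : A18 n k, e18 n k a = 0 → a = 0 := by
    intro a ha
    obtain ⟨p, rfl⟩ := Ideal.Quotient.mk_surjective a
    rw [Ideal.Quotient.eq_zero_iff_mem, Ideal.mem_span_singleton]
    have hK : ∀ i ∈ K18 n k, p ∈ IS n {i} := by
      intro i hi
      have hcomp := congrFun ha ⟨{i}, ⟨Finset.singleton_subset_iff.mpr hi,
        Finset.card_singleton i⟩⟩
      have : Ideal.Quotient.mk (IS n {i}) p = 0 := by
        rw [show Ideal.Quotient.mk (IS n {i}) p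
          = e18 n k (Ideal.Quotient.mk _ p) ⟨{i}, ⟨Finset.singleton_subset_iff.mpr hi,
            Finset.card_singleton i⟩⟩ from (Ideal.Quotient.factor_mk _ _).symm, hcomp]
        rfl
      exact Ideal.Quotient.eq_zero_iff_mem.mp this
    have hsupp : ∀ d ∈ p.support, ∀ i ∈ K18 n k, 1 ≤ d i := by
      intro d hd i hi
      by_contra h
      have hdi : avoid {i} d := by
        intro a ha'
        rw [Finset.mem_singleton.mp ha']
        omega
      exact (MvPolynomial.mem_support_iff.mp hd) (mem_IS_coeff (hK i hi) hdi)
    have hle : ∀ d ∈ p.support, (∑ i ∈ K18 n k, Finsupp.single i (1 : ℕ)) ≤ d := by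
      intro d hd
      rw [Finsupp.le_def]
      intro i
      have happ : (∑ j ∈ K18 n k, Finsupp.single j (1 : ℕ)) i
          = if i ∈ K18 n k then 1 else 0 := by
        rw [Finsupp.finset_sum_apply]
        simp only [Finsupp.single_apply]
        exact Finset.sum_ite_eq' (K18 n k) i (fun _ => 1)
      rw [happ]
      split
      · exact hsupp d hd i (by assumption)
      · exact Nat.zero_le _
    refine ⟨∑ d ∈ p.support, monomial (d - ∑ i ∈ K18 n k, Finsupp.single i 1) (coeff d p), ?_⟩
    rw [show fk n k = monomial (∑ i ∈ K18 n k, Finsupp.single i 1) 1 from prod_X_eq _,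
      Finset.mul_sum]
    conv_lhs => rw [← support_sum_monomial_coeff p]
    refine Finset.sum_congr rfl (fun d hd => ?_)
    rw [monomial_mul, one_mul, add_tsub_cancel_of_le (hle d hd)]
  intro a b hab
  obtain ⟨pa, rfl⟩ := Ideal.Quotient.mk_surjective a
  obtain ⟨pb, rfl⟩ := Ideal.Quotient.mk_surjective b
  have hsub : e18 n k (Ideal.Quotient.mk _ pa - Ideal.Quotient.mk _ pb) = 0 := by
    funext tt
    have hc := congrFun hab tt
    show Ideal.Quotient.factor _
      (Ideal.Quotient.mk _ pa - Ideal.Quotient.mk _ pb) = 0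
    rw [← RingHom.map_sub (Ideal.Quotient.mk (Ideal.span {fk n k})), Ideal.Quotient.factor_mk,
      RingHom.map_sub (Ideal.Quotient.mk (IS n tt.val)),
      show Ideal.Quotient.mk (IS n tt.val) pa
        = e18 n k (Ideal.Quotient.mk _ pa) tt from (Ideal.Quotient.factor_mk _ _).symm,
      show Ideal.Quotient.mk (IS n tt.val) pb
        = e18 n k (Ideal.Quotient.mk _ pb) tt from (Ideal.Quotient.factor_mk _ _).symm,
      hc, sub_self]
  have := hzero _ hsub
  exact sub_eq_zero.mp this

end SNC18

/-- Exactness of the Čech-type resolution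
`0 → A → ⊕_{|I|=1} A_I → ⊕_{|I|=2} A_I → ⋯ → A_{{1,…,k}} → 0`
of the structure ring of a simple normal crossing. -/
theorem stmt18 (n k : ℕ) (hk1 : 1 ≤ k) (hkn : k ≤ n) :
    Function.Injective (e18 n k) ∧
    Function.Exact (e18 n k) (d18 n k 1) ∧
    (∀ j : ℕ, 1 ≤ j → Function.Exact (d18 n k j) (d18 n k (j + 1))) :=
  ⟨SNC18.e18_injective, SNC18.exact_ed, fun j _ => SNC18.exact_dd j⟩
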